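/- Let L be an m×m positive semidefinite real matrix with Cholesky decomposition L = V Vᵀ where V is m×n. Then det(Vᵀ X V + Iₙ) = Σ_{S ⊆ [m]} (Π_{i∈S} xᵢ) · det(L_{S,S}), where X = diag(x₁,…,x_m) and L_{S,S} is the principal submatrix of L indexed by S. -/

import Mathlib

open Matrix

lemma det_piecewise_one {m : ℕ} (M : Matrix (Fin m) (Fin m) ℝ) (S : Finset (Fin m)) :
    Matrix.det (fun i => S.piecewise (fun i => M i) (fun i => (1 : Matrix (Fin m) (Fin m) ℝ) i) i) =
      (M.submatrix (fun i : S => (i : Fin m)) (fun i : S => (i : Fin m))).det := by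
  classical
  set N : Matrix (Fin m) (Fin m) ℝ :=
    fun i => S.piecewise (fun i => M i) (fun i => (1 : Matrix (Fin m) (Fin m) ℝ) i) i with hN
  let e : {x // x ∈ S} ⊕ {x // x ∉ S} ≃ Fin m := Equiv.sumCompl (· ∈ S)
  have h1 : N.submatrix e e =
      Matrix.fromBlocks (M.submatrix (fun i : S => (i : Fin m)) (fun i : S => (i : Fin m)))
        (Matrix.of fun (i : {x // x ∈ S}) (j : {x // x ∉ S}) => M i j) 0 1 := by
    ext i j
    rcases i with i | i <;> rcases j with j | j <;> dsimp only [Matrix.submatrix_apply] <;>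
      simp [hN, Finset.piecewise, e, Equiv.sumCompl_apply_inl, Equiv.sumCompl_apply_inr,
        i.2, j.2, Matrix.one_apply, Subtype.ext_iff]
    · exact fun h => i.2 (h ▸ j.2)
  calc N.det = (N.submatrix e e).det := (Matrix.det_submatrix_equiv_self e N).symm
    _ = _ := by rw [h1, Matrix.det_fromBlocks_zero₂₁, Matrix.det_one, mul_one]

lemma det_one_add_expand {m : ℕ} (M : Matrix (Fin m) (Fin m) ℝ) :
    (1 + M).det = ∑ S : Finset (Fin m),
      (M.submatrix (fun i : S => (i : Fin m)) (fun i : S => (i : Fin m))).det := by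
  classical
  have h := (Matrix.detRowAlternating (R := ℝ) (n := Fin m)).toMultilinearMap.map_add_univ
      (fun i => M i) (fun i => (1 : Matrix (Fin m) (Fin m) ℝ) i)
  have h2 : (1 + M).det =
      (Matrix.detRowAlternating (R := ℝ) (n := Fin m)).toMultilinearMap ((fun i => M i) + fun i => (1 : Matrix (Fin m) (Fin m) ℝ) i) := by
    congr 1
    ext i j
    simp [Matrix.add_apply, add_comm]
  rw [h2, h]
  exact Finset.sum_congr rfl fun S _ => det_piecewise_one M S

/-- generating polynomial of a determinantal measure. -/
theorem det_generating_polynomial (m n : ℕ) (L : Matrix (Fin m) (Fin m) ℝ)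
    (V : Matrix (Fin m) (Fin n) ℝ) (hPSD : L.PosSemidef) (hL : L = V * Vᵀ)
    (x : Fin m → ℝ) :
    (Vᵀ * Matrix.diagonal x * V + 1).det =
      ∑ S : Finset (Fin m),
        (∏ i ∈ S, x i) *
          (L.submatrix (fun i : S => (i : Fin m)) (fun i : S => (i : Fin m))).det := by
  classical
  have h1 : (Vᵀ * Matrix.diagonal x * V + 1).det = (1 + L * Matrix.diagonal x).det := by
    rw [add_comm, Matrix.det_one_add_mul_comm (Vᵀ * Matrix.diagonal x) V,
      ← Matrix.mul_assoc, ← hL]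
  rw [h1, det_one_add_expand]
  refine Finset.sum_congr rfl fun S _ => ?_
  have h2 : (L * Matrix.diagonal x).submatrix (fun i : S => (i : Fin m)) (fun i : S => (i : Fin m))
      = (L.submatrix (fun i : S => (i : Fin m)) (fun i : S => (i : Fin m))) *
        Matrix.diagonal (fun j : S => x j) := by
    ext i j
    simp [Matrix.mul_diagonal]
  rw [h2, Matrix.det_mul, Matrix.det_diagonal, mul_comm]
  congr 1
  exact (Finset.prod_coe_sort S x)
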